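/- Let f : ℝ^d → ℝ be differentiable and L-smooth with L > 0, and suppose f satisfies the Polyak–Łojasiewicz condition with parameter μ > 0 and value f*, i.e. ‖∇f(x)‖² ≥ 2μ(f(x) − f*) for all x ∈ ℝ^d. Let η > 0 and x, g ∈ ℝ^d, and set x' := x − η g. Then f(x') − f* ≤ (1 − μη)(f(x) − f*) − (1/(2η) − L/2)‖x' − x‖² + (η/2)‖g − ∇f(x)‖². -/

import Mathlib

open scoped RealInnerProductSpace BigOperators

lemma descent_aux (d : ℕ) (f : EuclideanSpace ℝ (Fin d) → ℝ) (L : ℝ) (hL : 0 ≤ L)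
    (hf : Differentiable ℝ f)
    (hsmooth : ∀ x y : EuclideanSpace ℝ (Fin d),
      ‖gradient f x - gradient f y‖ ≤ L * ‖x - y‖)
    (x y : EuclideanSpace ℝ (Fin d)) :
    f y ≤ f x + ⟪gradient f x, y - x⟫ + L / 2 * ‖y - x‖ ^ 2 := by
  set v := y - x with hv
  have hderiv : ∀ t : ℝ, HasDerivAt (fun t : ℝ => f (x + t • v))
      ⟪gradient f (x + t • v), v⟫ t := by
    intro t
    have h1 : HasDerivAt (fun t : ℝ => x + t • v) v t := by
      simpa using ((hasDerivAt_id t).smul_const v).const_add x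
    have h2 := ((hf (x + t • v)).hasGradientAt.hasFDerivAt).comp_hasDerivAt t h1
    simpa [InnerProductSpace.toDual_apply_apply, Function.comp_def] using h2
  set h : ℝ → ℝ := fun t => f (x + t • v) - t * ⟪gradient f x, v⟫ - L / 2 * t ^ 2 * ‖v‖ ^ 2
    with hh
  have hderivh : ∀ t : ℝ, HasDerivAt h
      (⟪gradient f (x + t • v), v⟫ - ⟪gradient f x, v⟫ - L * t * ‖v‖ ^ 2) t := by
    intro t
    have := ((hderiv t).sub
      ((hasDerivAt_id t).mul_const ⟪gradient f x, v⟫)).sub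
      (((hasDerivAt_pow 2 t).const_mul (L / 2)).mul_const (‖v‖ ^ 2))
    refine this.congr_deriv ?_
    ring
  have hanti : AntitoneOn h (Set.Icc (0:ℝ) 1) := by
    apply antitoneOn_of_deriv_nonpos (convex_Icc 0 1)
    · exact fun t _ => ((hderivh t).continuousAt).continuousWithinAt
    · intro t ht
      rw [interior_Icc] at ht
      exact ((hderivh t).differentiableAt).differentiableWithinAt
    · intro t ht
      rw [interior_Icc] at ht
      rw [(hderivh t).deriv]
      have h1 : ⟪gradient f (x + t • v) - gradient f x, v⟫ ≤ L * t * ‖v‖ ^ 2 := by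
        calc ⟪gradient f (x + t • v) - gradient f x, v⟫
            ≤ ‖gradient f (x + t • v) - gradient f x‖ * ‖v‖ := real_inner_le_norm _ _
          _ ≤ (L * ‖(x + t • v) - x‖) * ‖v‖ := by
              apply mul_le_mul_of_nonneg_right (hsmooth _ _) (norm_nonneg _)
          _ = L * t * ‖v‖ ^ 2 := by
              simp [norm_smul, abs_of_pos ht.1]; ring
      have h2 : ⟪gradient f (x + t • v) - gradient f x, v⟫
          = ⟪gradient f (x + t • v), v⟫ - ⟪gradient f x, v⟫ := by
        rw [inner_sub_left]
      linarith [h1, h2.symm.le, h2.le]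
  have h10 : h 1 ≤ h 0 := hanti (by norm_num) (by norm_num) (by norm_num)
  have hxy : x + (1:ℝ) • v = y := by rw [hv]; simp
  have h0 : h 0 = f (x + (0:ℝ) • v) := by simp only [hh]; ring
  have h1e : h 1 = f (x + (1:ℝ) • v) - ⟪gradient f x, v⟫ - L / 2 * ‖v‖ ^ 2 := by
    simp only [hh]; ring
  have hx0 : x + (0:ℝ) • v = x := by simp
  rw [h0, h1e, hxy, hx0] at h10
  linarith

theorem stmt_2 (d : ℕ) (f : EuclideanSpace ℝ (Fin d) → ℝ) (L : ℝ) (hL : 0 < L)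
    (hf : Differentiable ℝ f)
    (hsmooth : ∀ x y : EuclideanSpace ℝ (Fin d),
      ‖gradient f x - gradient f y‖ ≤ L * ‖x - y‖)
    (μ fstar : ℝ) (hμ : 0 < μ)
    (hpl : ∀ x : EuclideanSpace ℝ (Fin d), ‖gradient f x‖ ^ 2 ≥ 2 * μ * (f x - fstar))
    (η : ℝ) (hη : 0 < η) (x g x' : EuclideanSpace ℝ (Fin d))
    (hx' : x' = x - η • g) :
    f x' - fstar ≤ (1 - μ * η) * (f x - fstar)
      - (1 / (2 * η) - L / 2) * ‖x' - x‖ ^ 2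
      + η / 2 * ‖g - gradient f x‖ ^ 2 := by
  have hdesc := descent_aux d f L hL.le hf hsmooth x x'
  have hsub : x' - x = -(η • g) := by rw [hx']; abel
  have hnorm : ‖x' - x‖ ^ 2 = η ^ 2 * ‖g‖ ^ 2 := by
    rw [hsub, norm_neg, norm_smul, mul_pow, Real.norm_eq_abs, sq_abs]
  have hinner : ⟪gradient f x, x' - x⟫ = -(η * ⟪gradient f x, g⟫) := by
    rw [hsub, inner_neg_right, real_inner_smul_right]
  have hpol : ‖g - gradient f x‖ ^ 2
      = ‖g‖ ^ 2 - 2 * ⟪g, gradient f x⟫ + ‖gradient f x‖ ^ 2 := by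
    rw [norm_sub_sq_real]
  have hsym : ⟪g, gradient f x⟫ = ⟪gradient f x, g⟫ := real_inner_comm _ _
  have hplx := hpl x
  have hηinv : (1 / (2 * η)) * ‖x' - x‖ ^ 2 = η / 2 * ‖g‖ ^ 2 := by
    rw [hnorm]; field_simp
  rw [hinner, hnorm] at hdesc
  nlinarith [hdesc, hplx, hpol, hsym, hηinv, hnorm, sq_nonneg ‖g‖]
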